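/- arXiv:1110.0284 — 4 statements merged into one kernel-verified Lean document; each statement's English description precedes it below -/
import Mathlib

section
/- There exists a constant s > 0 such that for every integer n ≥ 2 and every n-Fekete set F_n for the Ginibre potential Q(z) = |z|², any two distinct points z, w ∈ F_n satisfy |z − w| > s/√n (that is, the family of Ginibre Fekete sets is uniformly separated). -/
open Finset

/-- Weighted Vandermonde determinant for the Ginibre potential `Q(z) = |z|²`. -/
noncomputable def vand (n : ℕ) (z : Fin n → ℂ) : ℝ :=
  (∏ i : Fin n, ∏ j ∈ Finset.univ.filter (fun j => i < j), ‖z i - z j‖ ^ 2) *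
    Real.exp (-(n : ℝ) * ∑ j : Fin n, ‖z j‖ ^ 2)

/-- `F` is an `n`-Fekete set for the Ginibre potential: `F` consists of `n`
distinct points maximizing the weighted Vandermonde determinant over `ℂⁿ`. -/
def IsFeketeGinibre (n : ℕ) (F : Finset ℂ) : Prop :=
  ∃ z : Fin n → ℂ, Function.Injective z ∧ Finset.image z Finset.univ = F ∧
    ∀ w : Fin n → ℂ, vand n w ≤ vand n z

lemma pair_split {n : ℕ} (f : Fin n → Fin n → ℝ) (hsym : ∀ a b, f a b = f b a) (i : Fin n) :
    ∏ a : Fin n, ∏ b ∈ Finset.univ.filter (fun b => a < b), f a b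
      = (∏ b ∈ Finset.univ.filter (fun b => b ≠ i), f i b) *
        ∏ a ∈ Finset.univ.filter (fun a => a ≠ i),
          ∏ b ∈ Finset.univ.filter (fun b => a < b ∧ b ≠ i), f a b := by
  have h1 : ∀ a : Fin n, ∏ b ∈ Finset.univ.filter (fun b => a < b), f a b
      = (if a < i then f a i else 1) * ∏ b ∈ Finset.univ.filter (fun b => a < b ∧ b ≠ i), f a b := by
    intro a
    by_cases h : a < i
    · have hi : i ∈ Finset.univ.filter (fun b => a < b) := by simp [h]
      have hset : (Finset.univ.filter (fun b => a < b)).erase i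
          = Finset.univ.filter (fun b => a < b ∧ b ≠ i) := by
        ext b
        simp only [Finset.mem_erase, Finset.mem_filter, Finset.mem_univ, true_and]
        tauto
      rw [← Finset.mul_prod_erase _ _ hi, if_pos h, hset]
    · rw [if_neg h, one_mul]
      apply Finset.prod_congr _ (fun _ _ => rfl)
      ext b
      simp only [Finset.mem_filter, Finset.mem_univ, true_and]
      constructor
      · intro hab
        exact ⟨hab, fun hbi => h (hbi ▸ hab)⟩
      · tauto
  calc ∏ a : Fin n, ∏ b ∈ Finset.univ.filter (fun b => a < b), f a b
      = (∏ a : Fin n, if a < i then f a i else 1) *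
          ∏ a : Fin n, ∏ b ∈ Finset.univ.filter (fun b => a < b ∧ b ≠ i), f a b := by
        rw [← Finset.prod_mul_distrib]
        exact Finset.prod_congr rfl (fun a _ => h1 a)
    _ = (∏ a ∈ Finset.univ.filter (fun a => a < i), f i a) *
          ((∏ b ∈ Finset.univ.filter (fun b => i < b), f i b) *
            ∏ a ∈ Finset.univ.filter (fun a => a ≠ i),
              ∏ b ∈ Finset.univ.filter (fun b => a < b ∧ b ≠ i), f a b) := by
        congr 1
        · rw [Finset.prod_filter]
          exact Finset.prod_congr rfl (fun a _ => by by_cases h : a < i <;> simp [h, hsym a i])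
        · rw [← Finset.mul_prod_erase _ _ (Finset.mem_univ i)]
          have hset : (Finset.univ : Finset (Fin n)).erase i
              = Finset.univ.filter (fun a => a ≠ i) := by
            ext b; simp
          have hfil : Finset.univ.filter (fun b : Fin n => i < b ∧ b ≠ i)
              = Finset.univ.filter (fun b => i < b) := by
            ext b
            simp only [Finset.mem_filter, Finset.mem_univ, true_and]
            exact ⟨fun h => h.1, fun h => ⟨h, fun hbi => absurd (hbi ▸ h) (lt_irrefl i)⟩⟩
          rw [hset, hfil]
    _ = _ := by
        rw [← mul_assoc]
        congr 1
        have hU : Finset.univ.filter (fun b : Fin n => b ≠ i)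
            = Finset.univ.filter (fun b => b < i) ∪ Finset.univ.filter (fun b => i < b) := by
          ext b
          simp only [Finset.mem_filter, Finset.mem_univ, true_and, Finset.mem_union]
          exact ⟨fun h => h.lt_or_gt, fun h => h.elim (fun h => h.ne) (fun h => h.ne')⟩
        rw [hU, Finset.prod_union]
        intro s hs1 hs2 b hb
        exfalso
        have h1 := hs1 hb; have h2 := hs2 hb
        simp only [Finset.mem_filter, Finset.mem_univ, true_and] at h1 h2
        exact absurd (h1.trans h2) (lt_irrefl b)

lemma vand_update {n : ℕ} (z : Fin n → ℂ) (i : Fin n) (ζ : ℂ) :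
    vand n (Function.update z i ζ) =
      ((∏ b ∈ Finset.univ.filter (fun b => b ≠ i), ‖ζ - z b‖ ^ 2) *
        Real.exp (-(n : ℝ) * ‖ζ‖ ^ 2)) *
      ((∏ a ∈ Finset.univ.filter (fun a => a ≠ i),
          ∏ b ∈ Finset.univ.filter (fun b => a < b ∧ b ≠ i), ‖z a - z b‖ ^ 2) *
        Real.exp (-(n : ℝ) * ∑ k ∈ Finset.univ.filter (fun k => k ≠ i), ‖z k‖ ^ 2)) := by
  set w := Function.update z i ζ with hw
  have hsym : ∀ a b : Fin n, ‖w a - w b‖ ^ 2 = ‖w b - w a‖ ^ 2 := by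
    intro a b; rw [← neg_sub (w b) (w a), norm_neg]
  have hprod := pair_split (fun a b => ‖w a - w b‖ ^ 2) hsym i
  have hwi : w i = ζ := Function.update_self i ζ z
  have hwne : ∀ b : Fin n, b ≠ i → w b = z b := fun b hb => Function.update_of_ne hb ζ z
  have hsum : ∑ j : Fin n, ‖w j‖ ^ 2
      = ‖ζ‖ ^ 2 + ∑ k ∈ Finset.univ.filter (fun k => k ≠ i), ‖z k‖ ^ 2 := by
    rw [← Finset.add_sum_erase _ _ (Finset.mem_univ i), hwi]
    congr 1
    have hset : (Finset.univ : Finset (Fin n)).erase i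
        = Finset.univ.filter (fun a => a ≠ i) := by ext b; simp
    rw [hset]
    exact Finset.sum_congr rfl (fun b hb => by
      rw [hwne b (by simpa using hb)])
  unfold vand
  rw [hprod, hsum]
  have e1 : ∀ b ∈ Finset.univ.filter (fun b : Fin n => b ≠ i),
      ‖w i - w b‖ ^ 2 = ‖ζ - z b‖ ^ 2 := by
    intro b hb
    rw [hwi, hwne b (by simpa using hb)]
  have e2 : ∀ a ∈ Finset.univ.filter (fun a : Fin n => a ≠ i),
      ∏ b ∈ Finset.univ.filter (fun b => a < b ∧ b ≠ i), ‖w a - w b‖ ^ 2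
        = ∏ b ∈ Finset.univ.filter (fun b => a < b ∧ b ≠ i), ‖z a - z b‖ ^ 2 := by
    intro a ha
    refine Finset.prod_congr rfl (fun b hb => ?_)
    rw [hwne a (by simpa using ha), hwne b (by simp at hb; exact hb.2)]
  rw [Finset.prod_congr rfl e1, Finset.prod_congr rfl e2]
  rw [mul_add, Real.exp_add]
  ring

set_option maxHeartbeats 1000000 in
/-- Fekete sets for the Ginibre potential are uniformly separated: there is `s > 0`
such that any two distinct points of an `n`-Fekete set are at distance `> s/√n`. -/
theorem fekete_ginibre_uniformly_separated :
    ∃ s : ℝ, 0 < s ∧ ∀ n : ℕ, 2 ≤ n → ∀ F : Finset ℂ, IsFeketeGinibre n F →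
      ∀ z ∈ F, ∀ w ∈ F, z ≠ w → s / Real.sqrt n < ‖z - w‖ := by
  refine ⟨1/8, by norm_num, ?_⟩
  intro n hn F hF p hp q hq hpq
  obtain ⟨z, hinj, himg, hmax⟩ := hF
  obtain ⟨i, -, hi⟩ := Finset.mem_image.mp (himg ▸ hp)
  obtain ⟨j, -, hj⟩ := Finset.mem_image.mp (himg ▸ hq)
  subst hi; subst hj
  have hij : i ≠ j := fun h => hpq (by rw [h])
  have hn0 : (0:ℝ) < n := by positivity
  set rn : ℝ := Real.sqrt n with hrn_def
  have hrn : 0 < rn := Real.sqrt_pos.mpr hn0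
  have hrnsq : rn ^ 2 = n := Real.sq_sqrt hn0.le
  set d : ℝ := ‖z i - z j‖ with hd_def
  have hd0 : 0 < d := by
    have : z i - z j ≠ 0 := sub_ne_zero.mpr (fun h => hij (hinj h))
    exact norm_pos_iff.mpr this
  by_cases hcase : 1/rn ≤ d
  · have h18 : (1/8:ℝ)/rn < 1/rn := by
      rw [div_lt_div_iff₀ hrn hrn]
      nlinarith
    exact lt_of_lt_of_le h18 hcase
  push_neg at hcase
  -- maximality of the one-variable function g
  set g : ℂ → ℝ := fun ζ =>
    (∏ b ∈ Finset.univ.filter (fun b => b ≠ i), ‖ζ - z b‖ ^ 2) *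
      Real.exp (-(n : ℝ) * ‖ζ‖ ^ 2) with hg_def
  set C : ℝ :=
    (∏ a ∈ Finset.univ.filter (fun a => a ≠ i),
        ∏ b ∈ Finset.univ.filter (fun b => a < b ∧ b ≠ i), ‖z a - z b‖ ^ 2) *
      Real.exp (-(n : ℝ) * ∑ k ∈ Finset.univ.filter (fun k => k ≠ i), ‖z k‖ ^ 2)
    with hC_def
  have hC : 0 < C := by
    apply mul_pos _ (Real.exp_pos _)
    apply Finset.prod_pos
    intro a _
    apply Finset.prod_pos
    intro b hb
    have hab : a ≠ b := (Finset.mem_filter.mp hb).2.1.ne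
    have : z a - z b ≠ 0 := sub_ne_zero.mpr (fun h => hab (hinj h))
    exact pow_pos (norm_pos_iff.mpr this) 2
  have hgle : ∀ ζ : ℂ, g ζ ≤ g (z i) := by
    intro ζ
    have h1 := hmax (Function.update z i ζ)
    have h2 : vand n z = g (z i) * C := by
      conv_lhs => rw [← Function.update_eq_self i z]
      rw [vand_update]
    rw [vand_update, h2] at h1
    exact le_of_mul_le_mul_right h1 hC
  set M : ℝ := g (z i) with hM_def
  have hM : 0 < M := by
    apply mul_pos _ (Real.exp_pos _)
    apply Finset.prod_pos
    intro b hb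
    have hbi : b ≠ i := (Finset.mem_filter.mp hb).2
    have : z i - z b ≠ 0 := sub_ne_zero.mpr (fun h => hbi (hinj h).symm)
    exact pow_pos (norm_pos_iff.mpr this) 2
  -- split off the j factor
  set S : Finset (Fin n) := Finset.univ.filter (fun k => k ≠ i ∧ k ≠ j) with hS_def
  have hgsplit : ∀ ζ : ℂ, g ζ = ‖ζ - z j‖ ^ 2 *
      ((∏ k ∈ S, ‖ζ - z k‖ ^ 2) * Real.exp (-(n : ℝ) * ‖ζ‖ ^ 2)) := by
    intro ζ
    have hjmem : j ∈ Finset.univ.filter (fun b : Fin n => b ≠ i) := by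
      simp [Ne.symm, hij.symm]
    have hset : (Finset.univ.filter (fun b : Fin n => b ≠ i)).erase j = S := by
      ext b
      simp only [hS_def, Finset.mem_erase, Finset.mem_filter, Finset.mem_univ, true_and]
      tauto
    rw [hg_def]
    dsimp only
    rw [← Finset.mul_prod_erase _ _ hjmem, hset, mul_assoc]
  -- the entire function
  set φ : ℂ → ℂ := fun ζ => (∏ k ∈ S, (ζ - z k)) *
      Complex.exp ((((n : ℝ) * Complex.normSq (z i) / 2 : ℝ) : ℂ)
        - (n : ℂ) * (starRingEnd ℂ) (z i) * ζ) with hφ_def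
  have hdiff : Differentiable ℂ φ := by
    apply Differentiable.mul
    · apply Differentiable.fun_finsetProd
      intro k _
      exact differentiable_id.sub_const (z k)
    · apply Differentiable.cexp
      apply Differentiable.sub (differentiable_const _)
      exact differentiable_id.const_mul _
  have habs : ∀ ζ : ℂ, ‖φ ζ‖ = (∏ k ∈ S, ‖ζ - z k‖) *
      Real.exp ((n : ℝ) * Complex.normSq (z i) / 2
        - (n : ℝ) * ((starRingEnd ℂ) (z i) * ζ).re) := by
    intro ζ
    rw [hφ_def]
    dsimp only
    rw [norm_mul, norm_prod, Complex.norm_exp]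
    congr 2
    simp only [Complex.sub_re, Complex.ofReal_re, Complex.mul_re, Complex.mul_im,
      Complex.ofReal_im, Complex.natCast_re, Complex.natCast_im]
    ring
  have hkey : ∀ ζ : ℂ, ‖φ ζ‖ ^ 2 * ‖ζ - z j‖ ^ 2
      = g ζ * Real.exp ((n : ℝ) * ‖ζ - z i‖ ^ 2) := by
    intro ζ
    have hE : ((n : ℝ) * Complex.normSq (z i) / 2 - (n : ℝ) * ((starRingEnd ℂ) (z i) * ζ).re)
        + ((n : ℝ) * Complex.normSq (z i) / 2 - (n : ℝ) * ((starRingEnd ℂ) (z i) * ζ).re)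
        = -(n : ℝ) * ‖ζ‖ ^ 2 + (n : ℝ) * ‖ζ - z i‖ ^ 2 := by
      simp only [Complex.sq_norm, Complex.normSq_sub]
      rw [show (ζ * (starRingEnd ℂ) (z i)).re = ((starRingEnd ℂ) (z i) * ζ).re by rw [mul_comm]]
      ring
    rw [habs ζ, hgsplit ζ, mul_pow, ← Finset.prod_pow, pow_two (Real.exp _), ← Real.exp_add,
      hE, Real.exp_add]
    ring
  -- maximum modulus on the ball of radius 2/rn
  set R : ℝ := 2 / rn with hR_def
  have hR0 : 0 < R := by positivity
  set Cb : ℝ := Real.sqrt (M * Real.exp 4 * n) with hCb_def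
  have hCb0 : 0 ≤ Cb := Real.sqrt_nonneg _
  have hCbsq : Cb ^ 2 = M * Real.exp 4 * n := by
    rw [hCb_def, Real.sq_sqrt]
    exact mul_nonneg (mul_nonneg hM.le (Real.exp_pos _).le) hn0.le
  have hfront : ∀ w ∈ frontier (Metric.ball (z i) R), ‖φ w‖ ≤ Cb := by
    intro w hw
    rw [frontier_ball _ (ne_of_gt hR0)] at hw
    have hdist : ‖w - z i‖ = R := by
      rw [← Complex.dist_eq]
      exact hw
    have hwj : 1 / rn ≤ ‖w - z j‖ := by
      have htri : ‖w - z i‖ ≤ ‖w - z j‖ + ‖z j - z i‖ := by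
        have := norm_sub_le_norm_sub_add_norm_sub w (z j) (z i)
        simpa using this
      have hji : ‖z j - z i‖ = d := by
        rw [hd_def, ← neg_sub, norm_neg]
      rw [hdist, hji] at htri
      have : R - d ≤ ‖w - z j‖ := by linarith
      have h2 : 1 / rn ≤ R - d := by
        rw [hR_def]
        have : 2 / rn - 1 / rn = 1 / rn := by ring
        linarith [hcase.le]
      linarith
    have hsq : ‖φ w‖ ^ 2 ≤ Cb ^ 2 := by
      have hkw := hkey w
      have hgw : g w ≤ M := hgle w
      have hexp : Real.exp ((n : ℝ) * ‖w - z i‖ ^ 2) = Real.exp 4 := by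
        congr 1
        rw [hdist, hR_def, div_pow, show ((2:ℝ))^2 = 4 by norm_num, ← hrnsq]
        field_simp
      have h1 : ‖φ w‖ ^ 2 * ‖w - z j‖ ^ 2 ≤ M * Real.exp 4 := by
        rw [hkw, hexp]
        exact mul_le_mul_of_nonneg_right hgw (Real.exp_pos _).le
      have h2 : (1 / rn) ^ 2 ≤ ‖w - z j‖ ^ 2 := by
        apply pow_le_pow_left₀ (by positivity) hwj
      have h3 : ‖φ w‖ ^ 2 * (1 / rn) ^ 2 ≤ M * Real.exp 4 := by
        calc ‖φ w‖ ^ 2 * (1 / rn) ^ 2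
            ≤ ‖φ w‖ ^ 2 * ‖w - z j‖ ^ 2 :=
              mul_le_mul_of_nonneg_left h2 (by positivity)
          _ ≤ M * Real.exp 4 := h1
      rw [hCbsq]
      have hrninv : (1 / rn) ^ 2 = 1 / n := by
        rw [div_pow, one_pow, hrnsq]
      rw [hrninv, mul_one_div] at h3
      exact (div_le_iff₀ hn0).mp h3
    calc ‖φ w‖ = Real.sqrt (‖φ w‖ ^ 2) := (Real.sqrt_sq (norm_nonneg _)).symm
      _ ≤ Real.sqrt (Cb ^ 2) := Real.sqrt_le_sqrt hsq
      _ = Cb := Real.sqrt_sq hCb0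
  have hmm : ‖φ (z i)‖ ≤ Cb :=
    Complex.norm_le_of_forall_mem_frontier_norm_le Metric.isBounded_ball
      hdiff.diffContOnCl hfront (subset_closure (Metric.mem_ball_self hR0))
  -- conclude
  have hcenter : ‖φ (z i)‖ ^ 2 * d ^ 2 = M := by
    have := hkey (z i)
    rw [sub_self, norm_zero] at this
    simpa using this
  have hsqle : ‖φ (z i)‖ ^ 2 ≤ Cb ^ 2 := by
    exact pow_le_pow_left₀ (norm_nonneg _) hmm 2
  have hfin : M ≤ M * Real.exp 4 * n * d ^ 2 := by
    calc M = ‖φ (z i)‖ ^ 2 * d ^ 2 := hcenter.symm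
      _ ≤ Cb ^ 2 * d ^ 2 := mul_le_mul_of_nonneg_right hsqle (by positivity)
      _ = M * Real.exp 4 * n * d ^ 2 := by rw [hCbsq]
  have h14 : 1 ≤ Real.exp 4 * n * d ^ 2 := by
    nlinarith [hM]
  have he2 : Real.exp 2 < 7.4 := by
    have h1 := Real.exp_one_lt_d9
    have h2 : Real.exp 2 = Real.exp 1 * Real.exp 1 := by
      rw [← Real.exp_add]; norm_num
    nlinarith [Real.exp_pos 1]
  have he4 : Real.exp 4 = Real.exp 2 * Real.exp 2 := by
    rw [← Real.exp_add]; norm_num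
  -- 1 ≤ (exp 2 * rn * d)^2
  have hx : 1 ≤ (Real.exp 2 * rn * d) ^ 2 := by
    have : (Real.exp 2 * rn * d) ^ 2 = Real.exp 4 * n * d ^ 2 := by
      rw [he4, ← hrnsq]; ring
    rw [this]; exact h14
  have hx2 : 1 ≤ Real.exp 2 * rn * d := by
    nlinarith [mul_pos (mul_pos (Real.exp_pos 2) hrn) hd0, hx]
  rw [div_lt_iff₀ hrn]
  nlinarith [hx2, he2, mul_pos hd0 hrn]
end

section
/- Let ρ > 0 and let Z = {Z_n}_{n≥1} be a triangular family with Z_n contained in the closed unit disk for every n. If Z is ρ-interpolating, then Z is uniformly separated: there exists s > 0 such that |z − w| > s/√n for any two distinct points z, w ∈ Z_n and all n. -/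
open MeasureTheory Filter

/-- Normalized area measure on `ℂ`: `dA = (1/π)·(Lebesgue measure)`. -/
noncomputable def dA : Measure ℂ := (ENNReal.ofReal (1 / Real.pi)) • (volume : Measure ℂ)

/-- `f` is a weighted polynomial in `H̃_k` for the Ginibre potential:
`f(z) = p(z) e^{-k|z|²/2}` with `p` a polynomial of degree at most `k-1`. -/
def MemHtilde (k : ℕ) (f : ℂ → ℂ) : Prop :=
  ∃ p : Polynomial ℂ, p.degree < (k : ℕ) ∧
    ∀ z : ℂ, f z = p.eval z * Complex.exp (-(k : ℂ) * (‖z‖ : ℂ) ^ 2 / 2)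

/-- The index `k` of the space `H̃_{ρn}`: `k = ρn` when `ρn` is an integer, and
`k = ⌊ρn⌋` otherwise; in both cases `k = ⌊ρn⌋`. -/
noncomputable def HkIdx (ρ : ℝ) (n : ℕ) : ℕ := ⌊ρ * n⌋₊

/-- The triangular family `Z` is `ρ`-interpolating: any set of values at the points of
`Z_n` can be interpolated by an `f ∈ H̃_{ρn}` with `‖f‖² ≤ (C/(nρ)) Σ_j |c_j|²`. -/
def IsInterpolating (ρ : ℝ) (Z : ℕ → Finset ℂ) : Prop :=
  ∃ C : ℝ, ∀ n : ℕ, 1 ≤ n → ∀ c : ℂ → ℂ, ∃ f : ℂ → ℂ,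
    MemHtilde (HkIdx ρ n) f ∧ (∀ z ∈ Z n, f z = c z) ∧
    (∫ z, ‖f z‖ ^ 2 ∂dA) ≤ C / (n * ρ) * ∑ z ∈ Z n, ‖c z‖ ^ 2

open Set

lemma circle_submean (g : ℂ → ℂ) (hg : Differentiable ℂ g) (c : ℂ) (r : ℝ) (hr : 0 < r) :
    2 * Real.pi * ‖g c‖ ^ 2 ≤ ∫ θ in (0:ℝ)..(2 * Real.pi), ‖g (circleMap c r θ)‖ ^ 2 := by
  have hG : Differentiable ℂ (fun z => g z * g z) := hg.mul hg
  have key := Complex.circleIntegral_sub_center_inv_smul_of_differentiable_on_off_countable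
      (f := fun z => g z * g z) (c := c) hr Set.countable_empty
      hG.continuous.continuousOn (fun z _ => hG.differentiableAt)
  have h2 : ∀ θ : ℝ, ‖deriv (circleMap c r) θ •
      ((circleMap c r θ - c)⁻¹ • (g (circleMap c r θ) * g (circleMap c r θ)))‖
      = ‖g (circleMap c r θ)‖ ^ 2 := by
    intro θ
    rw [deriv_circleMap, circleMap_sub_center, norm_smul, norm_smul, norm_mul, norm_inv]
    have hcm : ‖circleMap 0 r θ‖ = r := by
      rw [norm_circleMap_zero, abs_of_pos hr]
    rw [hcm]
    have : ‖Complex.I‖ = 1 := by simp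
    rw [this, norm_mul]
    field_simp [hr.ne']
  calc 2 * Real.pi * ‖g c‖ ^ 2
      = ‖(2 * (Real.pi:ℝ) * Complex.I : ℂ) • (g c * g c)‖ := by
        rw [norm_smul]
        have h1 : ‖(2 * (Real.pi:ℝ) * Complex.I : ℂ)‖ = 2 * Real.pi := by
          simp [abs_of_pos Real.pi_pos]
        rw [h1, norm_mul]; ring
    _ = ‖∮ z in C(c, r), (z - c)⁻¹ • (g z * g z)‖ := by rw [key]
    _ ≤ ∫ θ in (0:ℝ)..(2 * Real.pi), ‖deriv (circleMap c r) θ •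
          ((circleMap c r θ - c)⁻¹ • (g (circleMap c r θ) * g (circleMap c r θ)))‖ := by
        rw [circleIntegral]
        exact intervalIntegral.norm_integral_le_integral_norm Real.two_pi_pos.le
    _ = ∫ θ in (0:ℝ)..(2 * Real.pi), ‖g (circleMap c r θ)‖ ^ 2 :=
        intervalIntegral.integral_congr (fun θ _ => h2 θ)

lemma area_submean (g : ℂ → ℂ) (hg : Differentiable ℂ g) (c : ℂ) (r : ℝ) (hr : 0 < r) :
    ‖g c‖ ^ 2 * (Real.pi * r ^ 2) ≤ ∫ z in Metric.ball c r, ‖g z‖ ^ 2 := by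
  set σ : ℝ × ℝ → ℂ := fun p => p.1 * (Real.cos p.2 + Real.sin p.2 * Complex.I) with hσdef
  have hσ : ∀ p : ℝ × ℝ, Complex.polarCoord.symm p = σ p := fun p =>
    Complex.polarCoord_symm_apply p
  have hσcont : Continuous σ := by
    apply Continuous.mul
    · exact Complex.continuous_ofReal.comp continuous_fst
    · continuity
  have hcirc : ∀ x y : ℝ, c + σ (x, y) = circleMap c x y := by
    intro x y
    simp only [hσdef, circleMap, Complex.exp_mul_I]
    push_cast [Complex.ofReal_cos, Complex.ofReal_sin]
    ring
  set G : ℝ × ℝ → ℝ := fun p => p.1 * ‖g (c + σ p)‖ ^ 2 with hGdef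
  have hGcont : Continuous G := by
    apply Continuous.mul continuous_fst
    exact (continuous_norm.comp (hg.continuous.comp (continuous_const.add hσcont))).pow 2
  set S : Set (ℝ × ℝ) := Ioo (0:ℝ) r ×ˢ Ioo (-Real.pi) Real.pi with hSdef
  have hSmeas : MeasurableSet S := measurableSet_Ioo.prod measurableSet_Ioo
  -- Step A1: translate the ball
  have A1 : ∫ z in Metric.ball (0:ℂ) r, ‖g (c + z)‖ ^ 2 = ∫ z in Metric.ball c r, ‖g z‖ ^ 2 := by
    rw [← integral_indicator measurableSet_ball, ← integral_indicator measurableSet_ball]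
    rw [← integral_add_left_eq_self
      (fun z => Set.indicator (Metric.ball c r) (fun w => ‖g w‖ ^ 2) z) c]
    congr 1; funext u
    have hmem : c + u ∈ Metric.ball c r ↔ u ∈ Metric.ball (0:ℂ) r := by
      simp [Metric.mem_ball, dist_eq_norm]
    by_cases h : u ∈ Metric.ball (0:ℂ) r
    · rw [Set.indicator_of_mem (hmem.mpr h), Set.indicator_of_mem h]
    · rw [Set.indicator_of_notMem (fun hc => h (hmem.mp hc)), Set.indicator_of_notMem h]
  -- Step A2: polar coordinates
  have A2 : ∫ p in S, G p = ∫ z in Metric.ball (0:ℂ) r, ‖g (c + z)‖ ^ 2 := by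
    rw [← integral_indicator measurableSet_ball,
      ← Complex.integral_comp_polarCoord_symm
        (fun z => Set.indicator (Metric.ball (0:ℂ) r) (fun w => ‖g (c + w)‖ ^ 2) z),
      ← integral_indicator hSmeas,
      ← integral_indicator polarCoord.open_target.measurableSet]
    congr 1; funext p
    by_cases hp : p ∈ polarCoord.target
    · have hp1 : 0 < p.1 := by
        have := hp; rw [polarCoord_target] at this; exact this.1
      rw [Set.indicator_of_mem hp]
      have habs : ‖Complex.polarCoord.symm p‖ = p.1 := by
        rw [Complex.norm_polarCoord_symm, abs_of_pos hp1]
      by_cases hlt : p.1 < r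
      · have hmem2 : Complex.polarCoord.symm p ∈ Metric.ball (0:ℂ) r := by
          rw [Metric.mem_ball, dist_zero_right, habs]; exact hlt
        have hmemS : p ∈ S := by
          rw [polarCoord_target] at hp
          exact ⟨⟨hp1, hlt⟩, hp.2⟩
        rw [Set.indicator_of_mem hmemS, Set.indicator_of_mem hmem2, hGdef]
        simp only [smul_eq_mul, hσ]
      · have hmem2 : Complex.polarCoord.symm p ∉ Metric.ball (0:ℂ) r := by
          rw [Metric.mem_ball, dist_zero_right, habs]; exact hlt
        have hmemS : p ∉ S := fun hS => hlt hS.1.2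
        rw [Set.indicator_of_notMem hmemS, Set.indicator_of_notMem hmem2, smul_zero]
    · have hmemS : p ∉ S := by
        intro hS
        apply hp
        rw [polarCoord_target]
        exact ⟨hS.1.1, hS.2⟩
      rw [Set.indicator_of_notMem hmemS, Set.indicator_of_notMem hp]
  -- integrability on the product region
  have hGint : IntegrableOn G S := by
    have hK : IsCompact (Icc (0:ℝ) r ×ˢ Icc (-Real.pi) Real.pi) :=
      isCompact_Icc.prod isCompact_Icc
    exact (hGcont.continuousOn.integrableOn_compact hK).mono_set
      (Set.prod_mono Ioo_subset_Icc_self Ioo_subset_Icc_self)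
  -- Step A3: Fubini
  have A3 : ∫ p in S, G p
      = ∫ x in Ioo (0:ℝ) r, ∫ y in Ioo (-Real.pi) Real.pi, G (x, y) := by
    rw [hSdef] at hGint ⊢
    rw [show (volume : Measure (ℝ × ℝ)) = (volume : Measure ℝ).prod volume from
      Measure.volume_eq_prod ℝ ℝ] at hGint ⊢
    exact setIntegral_prod G hGint
  -- Step A4: inner bound
  have A4 : ∀ x ∈ Ioo (0:ℝ) r,
      x * (2 * Real.pi * ‖g c‖ ^ 2) ≤ ∫ y in Ioo (-Real.pi) Real.pi, G (x, y) := by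
    intro x hx
    have hx0 : 0 < x := hx.1
    have e1 : ∫ y in Ioo (-Real.pi) Real.pi, G (x, y)
        = ∫ y in (-Real.pi)..Real.pi, x * ‖g (circleMap c x y)‖ ^ 2 := by
      rw [intervalIntegral.integral_of_le (by linarith [Real.pi_pos]),
        integral_Ioc_eq_integral_Ioo]
      apply setIntegral_congr_fun measurableSet_Ioo
      intro y _
      simp only [hGdef, hcirc]
    have hper : Function.Periodic (fun y => x * ‖g (circleMap c x y)‖ ^ 2) (2 * Real.pi) := by
      intro y
      simp [(periodic_circleMap c x) y]
    have e2 := hper.intervalIntegral_add_eq (-Real.pi) 0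
    rw [show -Real.pi + 2 * Real.pi = Real.pi by ring, zero_add] at e2
    rw [e1, e2, intervalIntegral.integral_const_mul]
    have := circle_submean g hg c x hx0
    exact mul_le_mul_of_nonneg_left this hx0.le
  -- integrability of the inner integral
  have hInt1 : IntegrableOn (fun x => ∫ y in Ioo (-Real.pi) Real.pi, G (x, y)) (Ioo (0:ℝ) r) := by
    have h := hGint
    rw [hSdef, IntegrableOn,
      show (volume : Measure (ℝ × ℝ)) = (volume : Measure ℝ).prod volume from
        Measure.volume_eq_prod ℝ ℝ,
      ← Measure.prod_restrict] at h
    exact h.integral_prod_left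
  have hInt2 : IntegrableOn (fun x : ℝ => x * (2 * Real.pi * ‖g c‖ ^ 2)) (Ioo (0:ℝ) r) :=
    ((continuous_id.mul continuous_const).continuousOn.integrableOn_compact
      isCompact_Icc).mono_set Ioo_subset_Icc_self
  have A6 : ∫ x in Ioo (0:ℝ) r, x * (2 * Real.pi * ‖g c‖ ^ 2)
      ≤ ∫ x in Ioo (0:ℝ) r, ∫ y in Ioo (-Real.pi) Real.pi, G (x, y) :=
    setIntegral_mono_on hInt2 hInt1 measurableSet_Ioo A4
  have A7 : ∫ x in Ioo (0:ℝ) r, x * (2 * Real.pi * ‖g c‖ ^ 2)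
      = ‖g c‖ ^ 2 * (Real.pi * r ^ 2) := by
    rw [integral_mul_const]
    have : ∫ x in Ioo (0:ℝ) r, x = r ^ 2 / 2 := by
      rw [← integral_Ioc_eq_integral_Ioo, ← intervalIntegral.integral_of_le hr.le,
        integral_id]
      ring
    rw [this]; ring
  calc ‖g c‖ ^ 2 * (Real.pi * r ^ 2)
      = ∫ x in Ioo (0:ℝ) r, x * (2 * Real.pi * ‖g c‖ ^ 2) := A7.symm
    _ ≤ ∫ x in Ioo (0:ℝ) r, ∫ y in Ioo (-Real.pi) Real.pi, G (x, y) := A6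
    _ = ∫ p in S, G p := A3.symm
    _ = ∫ z in Metric.ball (0:ℂ) r, ‖g (c + z)‖ ^ 2 := A2
    _ = ∫ z in Metric.ball c r, ‖g z‖ ^ 2 := A1

lemma norm_f_eq (k : ℕ) (p : Polynomial ℂ) (u : ℂ) :
    ‖p.eval u * Complex.exp (-(k:ℂ) * (‖u‖ : ℂ) ^ 2 / 2)‖
      = ‖p.eval u‖ * Real.exp (-(k:ℝ) * ‖u‖ ^ 2 / 2) := by
  rw [norm_mul]
  congr 1
  rw [Complex.norm_exp]
  congr 1
  have : (-(k:ℂ) * (‖u‖ : ℂ) ^ 2 / 2) = (((-(k:ℝ) * ‖u‖ ^ 2 / 2 : ℝ)) : ℂ) := by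
    push_cast
    ring
  rw [this, Complex.ofReal_re]

lemma norm_weight_eq (k : ℕ) (p : Polynomial ℂ) (ζ u : ℂ) :
    ‖p.eval u * Complex.exp ((-(k:ℂ) * (starRingEnd ℂ ζ)) * u + (((k:ℝ) * ‖ζ‖ ^ 2 / 2 : ℝ) : ℂ))‖
      = (‖p.eval u‖ * Real.exp (-(k:ℝ) * ‖u‖ ^ 2 / 2)) * Real.exp ((k:ℝ) * ‖u - ζ‖ ^ 2 / 2) := by
  rw [norm_mul, Complex.norm_exp]
  have h2 : ‖u - ζ‖ ^ 2 = (u.re - ζ.re) ^ 2 + (u.im - ζ.im) ^ 2 := by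
    simp only [Complex.sq_norm, Complex.normSq_apply, Complex.sub_re,
      Complex.sub_im]
    ring
  have h3 : ‖ζ‖ ^ 2 = ζ.re ^ 2 + ζ.im ^ 2 := by
    simp only [Complex.sq_norm, Complex.normSq_apply]; ring
  have h4 : ‖u‖ ^ 2 = u.re ^ 2 + u.im ^ 2 := by
    simp only [Complex.sq_norm, Complex.normSq_apply]; ring
  have h1 : ((-(k:ℂ) * (starRingEnd ℂ ζ)) * u + (((k:ℝ) * ‖ζ‖ ^ 2 / 2 : ℝ) : ℂ)).re
      = (-(k:ℝ) * ‖u‖ ^ 2 / 2) + ((k:ℝ) * ‖u - ζ‖ ^ 2 / 2) := by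
    simp only [Complex.add_re, Complex.mul_re, Complex.mul_im, Complex.neg_re, Complex.neg_im,
      Complex.conj_re, Complex.conj_im, Complex.ofReal_re, Complex.natCast_re,
      Complex.natCast_im, h2, h3, h4]
    ring
  rw [h1, Real.exp_add, mul_assoc]

lemma pow_le_exp_aux (x : ℝ) (hx : 0 ≤ x) (m : ℕ) : x ^ m ≤ (m:ℝ) ^ m * Real.exp x := by
  rcases Nat.eq_zero_or_pos m with h0 | hm
  · subst h0
    simpa using Real.one_le_exp hx
  · have hmR : (0:ℝ) < m := by exact_mod_cast hm
    have h1 : x / m ≤ Real.exp (x / m) := by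
      have := Real.add_one_le_exp (x / m)
      linarith
    calc x ^ m = ((m:ℝ) * (x / m)) ^ m := by field_simp
      _ = (m:ℝ) ^ m * (x / m) ^ m := mul_pow _ _ _
      _ ≤ (m:ℝ) ^ m * Real.exp (x / m) ^ m := by
          gcongr
      _ = (m:ℝ) ^ m * Real.exp x := by
          rw [← Real.exp_nat_mul]
          congr 1
          field_simp

lemma integrable_gaussian_complex {b : ℝ} (hb : 0 < b) :
    Integrable (fun z : ℂ => Real.exp (-b * ‖z‖ ^ 2)) := by
  have h := GaussianFourier.integrable_cexp_neg_mul_sq_norm_add (V := ℂ) (b := (b : ℂ))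
      (by simpa using hb) 0 0
  have h2 := h.norm
  apply h2.congr
  filter_upwards with v
  rw [Complex.norm_exp]
  have he : (-(b:ℂ) * (‖v‖:ℂ) ^ 2 + 0 * ((inner ℝ (0:ℂ) v : ℝ) : ℂ)) = ((-b * ‖v‖ ^ 2 : ℝ) : ℂ) := by
    push_cast
    ring
  rw [he, Complex.ofReal_re]

lemma poly_growth (p : Polynomial ℂ) : ∀ z : ℂ,
    ‖p.eval z‖ ≤ (∑ i ∈ Finset.range (p.natDegree + 1), ‖p.coeff i‖) * (1 + ‖z‖) ^ p.natDegree := by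
  intro z
  set d := p.natDegree
  have h1 : p.eval z = ∑ i ∈ Finset.range (d + 1), p.coeff i * z ^ i := by
    rw [Polynomial.eval_eq_sum_range]
  rw [h1]
  calc ‖∑ i ∈ Finset.range (d + 1), p.coeff i * z ^ i‖
      ≤ ∑ i ∈ Finset.range (d + 1), ‖p.coeff i * z ^ i‖ := norm_sum_le _ _
    _ ≤ ∑ i ∈ Finset.range (d + 1), ‖p.coeff i‖ * (1 + ‖z‖) ^ d := by
        apply Finset.sum_le_sum
        intro i hi
        rw [norm_mul, norm_pow]
        apply mul_le_mul_of_nonneg_left _ (norm_nonneg _)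
        calc ‖z‖ ^ i ≤ (1 + ‖z‖) ^ i :=
              pow_le_pow_left₀ (norm_nonneg z) (by linarith [norm_nonneg z]) i
          _ ≤ (1 + ‖z‖) ^ d := by
              apply pow_le_pow_right₀ (by linarith [norm_nonneg z])
              exact Nat.lt_succ_iff.mp (Finset.mem_range.mp hi)
    _ = (∑ i ∈ Finset.range (d + 1), ‖p.coeff i‖) * (1 + ‖z‖) ^ d := by
        rw [← Finset.sum_mul]

lemma weight_bound (M kR : ℝ) (hM0 : 0 ≤ M) (hkR : 0 < kR) (d : ℕ) (t : ℝ) (ht0 : 0 ≤ t) :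
    (M * (1 + t) ^ d) ^ 2 * Real.exp (-kR * t ^ 2)
      ≤ (M ^ 2 * 2 ^ (2 * d) * (1 + (d:ℝ) ^ d * (2 / kR) ^ d)) * Real.exp (-(kR / 2) * t ^ 2) := by
  have hstep1 : (1 + t) ^ (2 * d) ≤ 2 ^ (2 * d) * (1 + t ^ (2 * d)) := by
    rcases le_total t 1 with h | h
    · have h2 : (1 + t) ^ (2 * d) ≤ 2 ^ (2 * d) :=
        pow_le_pow_left₀ (by linarith) (by linarith) _
      nlinarith [pow_nonneg ht0 (2 * d), pow_nonneg (by norm_num : (0:ℝ) ≤ 2) (2 * d)]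
    · have h1 : (1 + t) ^ (2 * d) ≤ (2 * t) ^ (2 * d) :=
        pow_le_pow_left₀ (by linarith) (by linarith) _
      rw [mul_pow] at h1
      nlinarith [pow_nonneg ht0 (2 * d), pow_nonneg (by norm_num : (0:ℝ) ≤ 2) (2 * d)]
  have hstep2 : t ^ (2 * d) ≤ (d:ℝ) ^ d * (2 / kR) ^ d * Real.exp ((kR / 2) * t ^ 2) := by
    have h1 := pow_le_exp_aux ((kR / 2) * t ^ 2) (by positivity) d
    have h2 : t ^ (2 * d) = ((2 / kR) * ((kR / 2) * t ^ 2)) ^ d := by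
      rw [show (2 / kR) * ((kR / 2) * t ^ 2) = t ^ 2 by field_simp, ← pow_mul]
    rw [h2, mul_pow]
    calc (2 / kR) ^ d * ((kR / 2) * t ^ 2) ^ d
        ≤ (2 / kR) ^ d * ((d:ℝ) ^ d * Real.exp ((kR / 2) * t ^ 2)) :=
          mul_le_mul_of_nonneg_left h1 (by positivity)
      _ = (d:ℝ) ^ d * (2 / kR) ^ d * Real.exp ((kR / 2) * t ^ 2) := by ring
  have hexp1 : Real.exp (-kR * t ^ 2) ≤ Real.exp (-(kR / 2) * t ^ 2) :=
    Real.exp_le_exp.mpr (by nlinarith [sq_nonneg t])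
  have hexp0 : (0:ℝ) < Real.exp (-kR * t ^ 2) := Real.exp_pos _
  have hcomb : Real.exp ((kR / 2) * t ^ 2) * Real.exp (-kR * t ^ 2)
      = Real.exp (-(kR / 2) * t ^ 2) := by
    rw [← Real.exp_add]; congr 1; ring
  have e1 : (M * (1 + t) ^ d) ^ 2 = M ^ 2 * (1 + t) ^ (2 * d) := by
    rw [mul_pow, ← pow_mul]; ring_nf
  rw [e1]
  have h3 : M ^ 2 * (1 + t) ^ (2 * d) * Real.exp (-kR * t ^ 2)
      ≤ M ^ 2 * (2 ^ (2 * d) * (1 + t ^ (2 * d))) * Real.exp (-kR * t ^ 2) := by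
    apply mul_le_mul_of_nonneg_right _ hexp0.le
    exact mul_le_mul_of_nonneg_left hstep1 (by positivity)
  have h4 : M ^ 2 * (2 ^ (2 * d) * (1 + t ^ (2 * d))) * Real.exp (-kR * t ^ 2)
      ≤ M ^ 2 * (2 ^ (2 * d) * (1 + (d:ℝ) ^ d * (2 / kR) ^ d * Real.exp ((kR / 2) * t ^ 2)))
        * Real.exp (-kR * t ^ 2) := by
    apply mul_le_mul_of_nonneg_right _ hexp0.le
    apply mul_le_mul_of_nonneg_left _ (by positivity)
    apply mul_le_mul_of_nonneg_left _ (by positivity)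
    linarith [hstep2]
  have h5 : M ^ 2 * (2 ^ (2 * d) * (1 + (d:ℝ) ^ d * (2 / kR) ^ d * Real.exp ((kR / 2) * t ^ 2)))
        * Real.exp (-kR * t ^ 2)
      = M ^ 2 * 2 ^ (2 * d) * Real.exp (-kR * t ^ 2)
        + M ^ 2 * 2 ^ (2 * d) * ((d:ℝ) ^ d * (2 / kR) ^ d)
          * (Real.exp ((kR / 2) * t ^ 2) * Real.exp (-kR * t ^ 2)) := by ring
  have h6 : M ^ 2 * 2 ^ (2 * d) * Real.exp (-kR * t ^ 2)
        ≤ M ^ 2 * 2 ^ (2 * d) * Real.exp (-(kR / 2) * t ^ 2) :=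
    mul_le_mul_of_nonneg_left hexp1 (by positivity)
  have h7 : (M ^ 2 * 2 ^ (2 * d) * (1 + (d:ℝ) ^ d * (2 / kR) ^ d))
        * Real.exp (-(kR / 2) * t ^ 2)
      = M ^ 2 * 2 ^ (2 * d) * Real.exp (-(kR / 2) * t ^ 2)
        + M ^ 2 * 2 ^ (2 * d) * ((d:ℝ) ^ d * (2 / kR) ^ d)
          * Real.exp (-(kR / 2) * t ^ 2) := by ring
  rw [h7]
  calc M ^ 2 * (1 + t) ^ (2 * d) * Real.exp (-kR * t ^ 2)
      ≤ M ^ 2 * (2 ^ (2 * d) * (1 + (d:ℝ) ^ d * (2 / kR) ^ d * Real.exp ((kR / 2) * t ^ 2)))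
        * Real.exp (-kR * t ^ 2) := le_trans h3 h4
    _ = M ^ 2 * 2 ^ (2 * d) * Real.exp (-kR * t ^ 2)
        + M ^ 2 * 2 ^ (2 * d) * ((d:ℝ) ^ d * (2 / kR) ^ d)
          * (Real.exp ((kR / 2) * t ^ 2) * Real.exp (-kR * t ^ 2)) := h5
    _ ≤ M ^ 2 * 2 ^ (2 * d) * Real.exp (-(kR / 2) * t ^ 2)
        + M ^ 2 * 2 ^ (2 * d) * ((d:ℝ) ^ d * (2 / kR) ^ d)
          * Real.exp (-(kR / 2) * t ^ 2) := by
        rw [hcomb]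
        linarith [h6]

lemma integrable_weight (k : ℕ) (hk : 1 ≤ k) (p : Polynomial ℂ) :
    Integrable (fun z : ℂ => ‖p.eval z‖ ^ 2 * Real.exp (-(k:ℝ) * ‖z‖ ^ 2)) := by
  have hkR : (0:ℝ) < k := by exact_mod_cast hk
  have hM0 : (0:ℝ) ≤ ∑ i ∈ Finset.range (p.natDegree + 1), ‖p.coeff i‖ :=
    Finset.sum_nonneg fun _ _ => norm_nonneg _
  have hg : Integrable (fun z : ℂ =>
      ((∑ i ∈ Finset.range (p.natDegree + 1), ‖p.coeff i‖) ^ 2 * 2 ^ (2 * p.natDegree)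
        * (1 + (p.natDegree:ℝ) ^ p.natDegree * (2 / (k:ℝ)) ^ p.natDegree))
      * Real.exp (-((k:ℝ) / 2) * ‖z‖ ^ 2)) :=
    (integrable_gaussian_complex (by positivity)).const_mul _
  apply hg.mono'
  · exact (by fun_prop :
      Continuous fun z : ℂ => ‖p.eval z‖ ^ 2 * Real.exp (-(k:ℝ) * ‖z‖ ^ 2)).aestronglyMeasurable
  · filter_upwards with z
    rw [Real.norm_of_nonneg (by positivity)]
    calc ‖p.eval z‖ ^ 2 * Real.exp (-(k:ℝ) * ‖z‖ ^ 2)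
        ≤ ((∑ i ∈ Finset.range (p.natDegree + 1), ‖p.coeff i‖) * (1 + ‖z‖) ^ p.natDegree) ^ 2
          * Real.exp (-(k:ℝ) * ‖z‖ ^ 2) := by
          apply mul_le_mul_of_nonneg_right _ (Real.exp_pos _).le
          exact pow_le_pow_left₀ (norm_nonneg _) (poly_growth p z) 2
      _ ≤ _ := weight_bound _ (k:ℝ) hM0 hkR p.natDegree ‖z‖ (norm_nonneg z)

lemma norm_f_sq_eq (k : ℕ) (p : Polynomial ℂ) (f : ℂ → ℂ)
    (hfp : ∀ u, f u = p.eval u * Complex.exp (-(k:ℂ) * (‖u‖ : ℂ) ^ 2 / 2)) :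
    ∀ u : ℂ, ‖f u‖ ^ 2 = ‖p.eval u‖ ^ 2 * Real.exp (-(k:ℝ) * ‖u‖ ^ 2) := by
  intro u
  rw [hfp u, norm_f_eq, mul_pow]
  congr 1
  rw [sq, ← Real.exp_add]
  congr 1
  ring

lemma integrable_f_sq (k : ℕ) (hk : 1 ≤ k) (p : Polynomial ℂ) (f : ℂ → ℂ)
    (hfp : ∀ u, f u = p.eval u * Complex.exp (-(k:ℂ) * (‖u‖ : ℂ) ^ 2 / 2)) :
    Integrable (fun u : ℂ => ‖f u‖ ^ 2) := by
  apply (integrable_weight k hk p).congr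
  filter_upwards with u
  rw [norm_f_sq_eq k p f hfp u]

lemma weighted_pointwise (k : ℕ) (hk : 1 ≤ k) (p : Polynomial ℂ) (f : ℂ → ℂ)
    (hfp : ∀ u, f u = p.eval u * Complex.exp (-(k:ℂ) * (‖u‖ : ℂ) ^ 2 / 2)) (ζ : ℂ) :
    ‖f ζ‖ ^ 2 ≤ (Real.exp 1 * k / Real.pi) * ∫ u, ‖f u‖ ^ 2 := by
  have hkR : (0:ℝ) < k := by exact_mod_cast hk
  set r : ℝ := Real.sqrt (1 / k) with hrdef
  have hr : 0 < r := Real.sqrt_pos.mpr (by positivity)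
  have hr2 : r ^ 2 = 1 / k := Real.sq_sqrt (by positivity)
  set g : ℂ → ℂ := fun u =>
    p.eval u * Complex.exp ((-(k:ℂ) * (starRingEnd ℂ ζ)) * u + (((k:ℝ) * ‖ζ‖ ^ 2 / 2 : ℝ) : ℂ))
    with hgdef
  have hg : Differentiable ℂ g := by
    apply Differentiable.mul
    · exact p.differentiable
    · exact (((differentiable_const _).mul differentiable_id).add (differentiable_const _)).cexp
  have hgn : ∀ u : ℂ, ‖g u‖ = ‖f u‖ * Real.exp ((k:ℝ) * ‖u - ζ‖ ^ 2 / 2) := by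
    intro u
    rw [hgdef]
    simp only
    rw [norm_weight_eq k p ζ u, hfp u, norm_f_eq]
  have hfg : ‖f ζ‖ = ‖g ζ‖ := by
    rw [hgn ζ, sub_self]
    simp
  have hIf : Integrable (fun u : ℂ => ‖f u‖ ^ 2) := integrable_f_sq k hk p f hfp
  have hIf0 : 0 ≤ ∫ u, ‖f u‖ ^ 2 := integral_nonneg fun u => by positivity
  -- submean for g
  have h1 : ‖g ζ‖ ^ 2 * (Real.pi * r ^ 2) ≤ ∫ u in Metric.ball ζ r, ‖g u‖ ^ 2 :=
    area_submean g hg ζ r hr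
  -- compare on ball
  have hgball : IntegrableOn (fun u => ‖g u‖ ^ 2) (Metric.ball ζ r) :=
    ((hg.continuous.norm.pow 2).continuousOn.integrableOn_compact
      (isCompact_closedBall ζ r)).mono_set Metric.ball_subset_closedBall
  have hfball : IntegrableOn (fun u => Real.exp 1 * ‖f u‖ ^ 2) (Metric.ball ζ r) :=
    (hIf.const_mul _).integrableOn
  have h2 : ∫ u in Metric.ball ζ r, ‖g u‖ ^ 2
      ≤ ∫ u in Metric.ball ζ r, Real.exp 1 * ‖f u‖ ^ 2 := by
    apply setIntegral_mono_on hgball hfball measurableSet_ball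
    intro u hu
    rw [hgn u, mul_pow]
    have hdist : ‖u - ζ‖ ^ 2 ≤ r ^ 2 := by
      apply pow_le_pow_left₀ (norm_nonneg _)
      rw [Metric.mem_ball, dist_eq_norm] at hu
      exact hu.le
    have hexp : Real.exp ((k:ℝ) * ‖u - ζ‖ ^ 2 / 2) ^ 2 ≤ Real.exp 1 := by
      rw [sq, ← Real.exp_add]
      apply Real.exp_le_exp.mpr
      rw [hr2] at hdist
      have : (k:ℝ) * ‖u - ζ‖ ^ 2 ≤ 1 := by
        calc (k:ℝ) * ‖u - ζ‖ ^ 2 ≤ (k:ℝ) * (1 / k) := by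
              exact mul_le_mul_of_nonneg_left hdist hkR.le
          _ = 1 := by field_simp
      linarith
    calc ‖f u‖ ^ 2 * Real.exp ((k:ℝ) * ‖u - ζ‖ ^ 2 / 2) ^ 2
        ≤ ‖f u‖ ^ 2 * Real.exp 1 := mul_le_mul_of_nonneg_left hexp (by positivity)
      _ = Real.exp 1 * ‖f u‖ ^ 2 := by ring
  have h3 : ∫ u in Metric.ball ζ r, Real.exp 1 * ‖f u‖ ^ 2
      ≤ Real.exp 1 * ∫ u, ‖f u‖ ^ 2 := by
    rw [integral_const_mul]
    apply mul_le_mul_of_nonneg_left _ (Real.exp_pos 1).le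
    exact setIntegral_le_integral hIf (ae_of_all _ fun u => by positivity)
  have h4 : ‖f ζ‖ ^ 2 * (Real.pi * (1 / k)) ≤ Real.exp 1 * ∫ u, ‖f u‖ ^ 2 := by
    rw [← hr2, hfg]
    exact le_trans h1 (le_trans h2 h3)
  have h5 : ‖f ζ‖ ^ 2 = (‖f ζ‖ ^ 2 * (Real.pi * (1 / k))) * ((k:ℝ) / Real.pi) := by
    field_simp
  rw [h5]
  calc (‖f ζ‖ ^ 2 * (Real.pi * (1 / k))) * ((k:ℝ) / Real.pi)
      ≤ (Real.exp 1 * ∫ u, ‖f u‖ ^ 2) * ((k:ℝ) / Real.pi) :=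
        mul_le_mul_of_nonneg_right h4 (by positivity)
    _ = (Real.exp 1 * k / Real.pi) * ∫ u, ‖f u‖ ^ 2 := by ring

/-- A `ρ`-interpolating triangular family contained in the closed unit disk is
uniformly separated. -/
theorem interpolating_uniformly_separated
    (ρ : ℝ) (hρ : 0 < ρ) (Z : ℕ → Finset ℂ)
    (hZD : ∀ n : ℕ, 1 ≤ n → ∀ z ∈ Z n, ‖z‖ ≤ 1)
    (hI : IsInterpolating ρ Z) :
    ∃ s : ℝ, 0 < s ∧ ∀ n : ℕ, 1 ≤ n → ∀ z ∈ Z n, ∀ w ∈ Z n, z ≠ w →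
      s / Real.sqrt n < ‖z - w‖ := by
  obtain ⟨C, hC⟩ := hI
  have hC'1 : (1:ℝ) ≤ max C 1 := le_max_right _ _
  have hC'0 : (0:ℝ) < max C 1 := lt_of_lt_of_le one_pos hC'1
  have hE1 : (1:ℝ) ≤ Real.exp 1 := Real.one_le_exp (by norm_num)
  have hE0 : (0:ℝ) < Real.exp 1 := Real.exp_pos 1
  have hSC1 : (1:ℝ) ≤ Real.sqrt (max C 1) := by
    nlinarith [Real.sq_sqrt hC'0.le, Real.sqrt_nonneg (max C 1)]
  have hSC0 : (0:ℝ) < Real.sqrt (max C 1) := lt_of_lt_of_le one_pos hSC1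
  refine ⟨1 / (2 * Real.exp 1 ^ 2 * Real.sqrt (max C 1 * ρ)), by positivity, ?_⟩
  intro n hn z hz w hw hzw
  have hn0 : (0:ℝ) < n := by exact_mod_cast hn
  obtain ⟨f, hmem, hval, hnorm⟩ := hC n hn (fun u => if u = z then 1 else 0)
  obtain ⟨p, hdeg, hfp⟩ := hmem
  have hfz : f z = 1 := by rw [hval z hz]; simp
  have hfw : f w = 0 := by
    rw [hval w hw]
    simp only [if_neg (Ne.symm hzw)]
  set k := HkIdx ρ n with hkdef
  by_cases hk0 : k = 0
  · exfalso
    rw [hk0] at hdeg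
    have hdeg' : p.degree < (0 : WithBot ℕ) := by exact_mod_cast hdeg
    have hp0 : p = 0 := Polynomial.degree_eq_bot.mp (Nat.WithBot.lt_zero_iff.mp hdeg')
    rw [hfp z, hp0] at hfz
    simp at hfz
  have hk1 : 1 ≤ k := Nat.one_le_iff_ne_zero.mpr hk0
  have hkR : (0:ℝ) < k := by exact_mod_cast hk1
  have hnρ : 0 < (n:ℝ) * ρ := by positivity
  have hkle : (k:ℝ) ≤ ρ * n := by
    rw [hkdef, HkIdx]
    exact Nat.floor_le (by positivity)
  -- the sum of squared values is 1
  have hsum : (∑ u ∈ Z n, ‖(fun u => if u = z then (1:ℂ) else 0) u‖ ^ 2) = 1 := by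
    rw [Finset.sum_eq_single_of_mem z hz]
    · simp
    · intro b _ hb
      simp [hb]
  rw [hsum, mul_one] at hnorm
  -- L² bound wrt Lebesgue
  have hIf : Integrable (fun u : ℂ => ‖f u‖ ^ 2) := integrable_f_sq k hk1 p f hfp
  have hdA : ∫ u, ‖f u‖ ^ 2 ∂dA = (1 / Real.pi) * ∫ u, ‖f u‖ ^ 2 := by
    rw [dA, integral_smul_measure, ENNReal.toReal_ofReal (by positivity), smul_eq_mul]
  have hIvol : ∫ u, ‖f u‖ ^ 2 ≤ Real.pi * max C 1 / ((n:ℝ) * ρ) := by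
    rw [hdA] at hnorm
    have hCb : C / ((n:ℝ) * ρ) ≤ max C 1 / ((n:ℝ) * ρ) := by
      gcongr
      exact le_max_left _ _
    have h := le_trans hnorm hCb
    calc ∫ u, ‖f u‖ ^ 2 = Real.pi * ((1 / Real.pi) * ∫ u, ‖f u‖ ^ 2) := by
          field_simp
      _ ≤ Real.pi * (max C 1 / ((n:ℝ) * ρ)) := mul_le_mul_of_nonneg_left h Real.pi_pos.le
      _ = Real.pi * max C 1 / ((n:ℝ) * ρ) := by ring
  -- pointwise bound
  have hpt : ∀ ζ : ℂ, ‖f ζ‖ ^ 2 ≤ Real.exp 1 * max C 1 := by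
    intro ζ
    calc ‖f ζ‖ ^ 2 ≤ (Real.exp 1 * k / Real.pi) * ∫ u, ‖f u‖ ^ 2 :=
          weighted_pointwise k hk1 p f hfp ζ
      _ ≤ (Real.exp 1 * k / Real.pi) * (Real.pi * max C 1 / ((n:ℝ) * ρ)) :=
          mul_le_mul_of_nonneg_left hIvol (by positivity)
      _ = Real.exp 1 * max C 1 * ((k:ℝ) / ((n:ℝ) * ρ)) := by
          field_simp
      _ ≤ Real.exp 1 * max C 1 * 1 := by
          apply mul_le_mul_of_nonneg_left _ (by positivity)
          rw [div_le_one hnρ, mul_comm]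
          exact hkle
      _ = Real.exp 1 * max C 1 := mul_one _
  have hfsup : ∀ ζ : ℂ, ‖f ζ‖ ≤ Real.exp 1 * Real.sqrt (max C 1) := by
    intro ζ
    have h := hpt ζ
    have ha : (1:ℝ) ≤ Real.sqrt (Real.exp 1) := by
      nlinarith [Real.sq_sqrt hE0.le, Real.sqrt_nonneg (Real.exp 1)]
    have h3 : Real.sqrt (Real.exp 1) ≤ Real.exp 1 := by
      calc Real.sqrt (Real.exp 1) = 1 * Real.sqrt (Real.exp 1) := (one_mul _).symm
        _ ≤ Real.sqrt (Real.exp 1) * Real.sqrt (Real.exp 1) :=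
            mul_le_mul_of_nonneg_right ha (Real.sqrt_nonneg _)
        _ = Real.exp 1 := Real.mul_self_sqrt hE0.le
    calc ‖f ζ‖ = Real.sqrt (‖f ζ‖ ^ 2) := (Real.sqrt_sq (norm_nonneg _)).symm
      _ ≤ Real.sqrt (Real.exp 1 * max C 1) := Real.sqrt_le_sqrt h
      _ = Real.sqrt (Real.exp 1) * Real.sqrt (max C 1) := Real.sqrt_mul hE0.le _
      _ ≤ Real.exp 1 * Real.sqrt (max C 1) :=
          mul_le_mul_of_nonneg_right h3 (Real.sqrt_nonneg _)
  -- factor out the zero at w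
  have hpw : p.eval w = 0 := by
    have h := (hfp w).symm.trans hfw
    exact (mul_eq_zero.mp h).resolve_right (Complex.exp_ne_zero _)
  obtain ⟨q, hq⟩ := Polynomial.dvd_iff_isRoot.mpr hpw
  set R : ℝ := Real.sqrt (1 / k) with hRdef
  have hR : 0 < R := Real.sqrt_pos.mpr (by positivity)
  have hR2 : R ^ 2 = 1 / k := Real.sq_sqrt (by positivity)
  set hfun : ℂ → ℂ := fun u =>
    p.eval u * Complex.exp ((-(k:ℂ) * (starRingEnd ℂ w)) * u + (((k:ℝ) * ‖w‖ ^ 2 / 2 : ℝ) : ℂ))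
    with hhdef
  set qf : ℂ → ℂ := fun u =>
    q.eval u * Complex.exp ((-(k:ℂ) * (starRingEnd ℂ w)) * u + (((k:ℝ) * ‖w‖ ^ 2 / 2 : ℝ) : ℂ))
    with hqfdef
  have hfactor : ∀ u : ℂ, hfun u = (u - w) * qf u := by
    intro u
    rw [hhdef, hqfdef]
    simp only
    rw [hq, Polynomial.eval_mul, Polynomial.eval_sub, Polynomial.eval_X, Polynomial.eval_C]
    ring
  have hhn : ∀ u : ℂ, ‖hfun u‖ = ‖f u‖ * Real.exp ((k:ℝ) * ‖u - w‖ ^ 2 / 2) := by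
    intro u
    rw [hhdef]
    simp only
    rw [norm_weight_eq k p w u, hfp u, norm_f_eq]
  have hqdiff : Differentiable ℂ qf :=
    q.differentiable.mul
      ((((differentiable_const _).mul differentiable_id).add (differentiable_const _)).cexp)
  -- bound for qf on the sphere
  have hsphere : ∀ ζ ∈ Metric.sphere w R, ‖qf ζ‖ ≤ Real.exp 1 ^ 2 * Real.sqrt (max C 1) / R := by
    intro ζ hζ
    have hζw : ‖ζ - w‖ = R := by rwa [mem_sphere_iff_norm] at hζ
    have h1 : ‖hfun ζ‖ = R * ‖qf ζ‖ := by rw [hfactor ζ, norm_mul, hζw]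
    have h2 : ‖hfun ζ‖ ≤ Real.exp 1 ^ 2 * Real.sqrt (max C 1) := by
      rw [hhn ζ, hζw]
      have hexpR : Real.exp ((k:ℝ) * R ^ 2 / 2) ≤ Real.exp 1 := by
        apply Real.exp_le_exp.mpr
        rw [hR2]
        rw [show (k:ℝ) * (1 / k) / 2 = 1 / 2 by field_simp]
        norm_num
      calc ‖f ζ‖ * Real.exp ((k:ℝ) * R ^ 2 / 2)
          ≤ (Real.exp 1 * Real.sqrt (max C 1)) * Real.exp 1 := by
            apply mul_le_mul (hfsup ζ) hexpR (Real.exp_pos _).le (by positivity)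
        _ = Real.exp 1 ^ 2 * Real.sqrt (max C 1) := by ring
    rw [h1] at h2
    rw [le_div_iff₀ hR]
    linarith [h2]
  -- maximum modulus
  have hmax : ∀ x ∈ Metric.closedBall w R, ‖qf x‖ ≤ Real.exp 1 ^ 2 * Real.sqrt (max C 1) / R := by
    intro x hx
    apply Complex.norm_le_of_forall_mem_frontier_norm_le Metric.isBounded_ball
      hqdiff.diffContOnCl
    · intro ζ hζ
      rw [frontier_ball w hR.ne'] at hζ
      exact hsphere ζ hζ
    · rwa [closure_ball w hR.ne']
  -- sqrt facts
  have hsρn0 : (0:ℝ) < Real.sqrt (ρ * n) := Real.sqrt_pos.mpr (by positivity)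
  have hsn0 : (0:ℝ) < Real.sqrt n := Real.sqrt_pos.mpr hn0
  have hsρ0 : (0:ℝ) < Real.sqrt ρ := Real.sqrt_pos.mpr hρ
  have hRge : 1 / Real.sqrt (ρ * n) ≤ R := by
    rw [hRdef, show (1:ℝ) / Real.sqrt (ρ * n) = Real.sqrt (1 / (ρ * n)) by
      rw [one_div, one_div, Real.sqrt_inv]]
    apply Real.sqrt_le_sqrt
    apply div_le_div_of_nonneg_left one_pos.le hkR  -- 1/(ρn) ≤ 1/k needs k ≤ ρn
    exact hkle
  set s : ℝ := 1 / (2 * Real.exp 1 ^ 2 * Real.sqrt (max C 1 * ρ)) with hsdef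
  have hsn : s / Real.sqrt n
      = 1 / (2 * (Real.exp 1 ^ 2 * Real.sqrt (max C 1) * Real.sqrt (ρ * n))) := by
    rw [hsdef, Real.sqrt_mul hC'0.le, Real.sqrt_mul hρ.le, div_div]
    congr 1
    ring
  have hQkey : s / Real.sqrt n < R / (Real.exp 1 ^ 2 * Real.sqrt (max C 1)) := by
    rw [hsn]
    have hQ : 1 / (Real.exp 1 ^ 2 * Real.sqrt (max C 1) * Real.sqrt (ρ * n))
        ≤ R / (Real.exp 1 ^ 2 * Real.sqrt (max C 1)) := by
      rw [div_le_div_iff₀ (by positivity) (by positivity)]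
      calc 1 * (Real.exp 1 ^ 2 * Real.sqrt (max C 1))
          = (1 / Real.sqrt (ρ * n)) * (Real.exp 1 ^ 2 * Real.sqrt (max C 1) * Real.sqrt (ρ * n))
            := by field_simp
        _ ≤ R * (Real.exp 1 ^ 2 * Real.sqrt (max C 1) * Real.sqrt (ρ * n)) :=
            mul_le_mul_of_nonneg_right hRge (by positivity)
    calc 1 / (2 * (Real.exp 1 ^ 2 * Real.sqrt (max C 1) * Real.sqrt (ρ * n)))
        < 1 / (Real.exp 1 ^ 2 * Real.sqrt (max C 1) * Real.sqrt (ρ * n)) := by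
          apply div_lt_div_of_pos_left one_pos (by positivity)
          have hX : 0 < Real.exp 1 ^ 2 * Real.sqrt (max C 1) * Real.sqrt (ρ * n) := by
            positivity
          linarith
      _ ≤ R / (Real.exp 1 ^ 2 * Real.sqrt (max C 1)) := hQ
  rcases le_or_gt ‖z - w‖ R with hcase | hcase
  · -- z in the closed ball: use factorization bound
    have hz' : z ∈ Metric.closedBall w R := by
      rw [Metric.mem_closedBall, dist_eq_norm]; exact hcase
    have hfz1 : ‖f z‖ = 1 := by rw [hfz]; exact norm_one
    have h1 : (1:ℝ) ≤ ‖hfun z‖ := by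
      rw [hhn z, hfz1, one_mul]
      exact Real.one_le_exp (by positivity)
    have h2 : ‖hfun z‖ ≤ ‖z - w‖ * (Real.exp 1 ^ 2 * Real.sqrt (max C 1) / R) := by
      rw [hfactor z, norm_mul]
      exact mul_le_mul_of_nonneg_left (hmax z hz') (norm_nonneg _)
    have hlow : R / (Real.exp 1 ^ 2 * Real.sqrt (max C 1)) ≤ ‖z - w‖ := by
      rw [div_le_iff₀ (by positivity)]
      have h3 : (1:ℝ) ≤ ‖z - w‖ * (Real.exp 1 ^ 2 * Real.sqrt (max C 1)) / R := by
        calc (1:ℝ) ≤ ‖z - w‖ * (Real.exp 1 ^ 2 * Real.sqrt (max C 1) / R) := le_trans h1 h2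
          _ = ‖z - w‖ * (Real.exp 1 ^ 2 * Real.sqrt (max C 1)) / R := by ring
      rw [le_div_iff₀ hR, one_mul] at h3
      exact h3
    exact lt_of_lt_of_le hQkey hlow
  · -- points are far apart anyway
    have hRle : R / (Real.exp 1 ^ 2 * Real.sqrt (max C 1)) ≤ R := by
      apply div_le_self hR.le
      nlinarith [hE1, hSC1]
    calc s / Real.sqrt n < R / (Real.exp 1 ^ 2 * Real.sqrt (max C 1)) := hQkey
      _ ≤ R := hRle
      _ < ‖z - w‖ := hcase
end

section
/- Let 0 < s ≤ 1 and let n be a positive integer. If z ∈ ℂ satisfies |z| ≤ 1 + s/√n and r is a real number with 1/2 ≤ r ≤ 1 + s/√n, then |z − r| ≤ 2·|z·r − 1| + 4s/√n. -/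
set_option maxHeartbeats 1000000 in
/-- If `|z| ≤ 1 + s/√n` and `1/2 ≤ r ≤ 1 + s/√n` with `0 < s ≤ 1`, then
`|z − r| ≤ 2|zr − 1| + 4s/√n`. -/
theorem dist_le_two_mul_dist_prod_one
    (s : ℝ) (hs0 : 0 < s) (hs1 : s ≤ 1) (n : ℕ) (hn : 1 ≤ n)
    (z : ℂ) (r : ℝ)
    (hz : ‖z‖ ≤ 1 + s / Real.sqrt n)
    (hr1 : 1 / 2 ≤ r) (hr2 : r ≤ 1 + s / Real.sqrt n) :
    ‖z - (r : ℂ)‖ ≤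
      2 * ‖z * (r : ℂ) - 1‖ + 4 * s / Real.sqrt n := by
  have hsn : (1:ℝ) ≤ Real.sqrt n := by
    rw [show (1:ℝ) = Real.sqrt 1 by simp]
    exact Real.sqrt_le_sqrt (by exact_mod_cast hn)
  set ε : ℝ := s / Real.sqrt n with hεdef
  have hε0 : 0 < ε := div_pos hs0 (by linarith)
  have hε1 : ε ≤ 1 := by
    rw [hεdef, div_le_one (by linarith)]; linarith
  set a : ℝ := ‖z‖ with ha
  set t : ℝ := ‖z * (r:ℂ) - 1‖ with htdef
  set d : ℝ := ‖z - (r:ℂ)‖ with hddef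
  have ha0 : 0 ≤ a := norm_nonneg _
  have ht0 : 0 ≤ t := norm_nonneg _
  have hd0 : 0 ≤ d := norm_nonneg _
  have hr0 : (0:ℝ) < r := by linarith
  have hlow : 1 - a * r ≤ t := by
    have h := norm_sub_norm_le (1:ℂ) (z * (r:ℂ))
    rw [norm_sub_rev] at h
    simp only [norm_mul, Complex.norm_real, Real.norm_eq_abs, abs_of_pos hr0,
      norm_one, ← ha, ← htdef] at h
    linarith
  have hid : t^2 - d^2 = (a^2 - 1) * (r^2 - 1) := by
    rw [htdef, hddef, ha, Complex.sq_norm, Complex.sq_norm, Complex.sq_norm]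
    simp only [Complex.normSq_apply, Complex.mul_re, Complex.mul_im, Complex.sub_re,
      Complex.sub_im, Complex.ofReal_re, Complex.ofReal_im, Complex.one_re,
      Complex.one_im]
    ring
  clear_value a t d
  clear hddef htdef ha
  have key : d^2 ≤ (2*t + 4*ε)^2 := by
    have ha2 : a^2 ≤ 1 + 3*ε := by nlinarith
    have hr2' : r^2 ≤ 1 + 3*ε := by nlinarith
    rcases le_or_gt a 1 with hA | hA <;> rcases le_or_gt r 1 with hR | hR
    · nlinarith [mul_nonneg (by nlinarith : (0:ℝ) ≤ 1 - a^2) (by nlinarith : (0:ℝ) ≤ 1 - r^2),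
        mul_nonneg hε0.le ht0, sq_nonneg ε]
    · -- a ≤ 1 < r
      have h1 : 1 - a ≤ t + ε := by
        nlinarith [mul_nonneg ha0 (by linarith : (0:ℝ) ≤ 1 + ε - r),
          mul_nonneg (by linarith : (0:ℝ) ≤ 1 - a) hε0.le]
      have hq : (0:ℝ) ≤ r^2 - 1 := by nlinarith
      have hb : r^2 - 1 ≤ 3*ε := by linarith
      have p1 : (1-a)*(r^2-1) ≤ (t+ε)*(3*ε) :=
        mul_le_mul h1 hb hq (by linarith)
      have p2 : a*((1-a)*(r^2-1)) ≤ 1*((t+ε)*(3*ε)) :=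
        mul_le_mul hA p1 (mul_nonneg (by linarith) hq) one_pos.le
      nlinarith [mul_nonneg hε0.le ht0, sq_nonneg t, sq_nonneg ε]
    · -- r ≤ 1 < a
      have h1 : 1 - r ≤ t + ε := by
        nlinarith [mul_nonneg hr0.le (by linarith : (0:ℝ) ≤ 1 + ε - a),
          mul_nonneg (by linarith : (0:ℝ) ≤ 1 - r) hε0.le]
      have hq : (0:ℝ) ≤ a^2 - 1 := by nlinarith
      have hb : a^2 - 1 ≤ 3*ε := by linarith
      have p1 : (1-r)*(a^2-1) ≤ (t+ε)*(3*ε) :=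
        mul_le_mul h1 hb hq (by linarith)
      have p2 : r*((1-r)*(a^2-1)) ≤ 1*((t+ε)*(3*ε)) :=
        mul_le_mul hR p1 (mul_nonneg (by linarith) hq) one_pos.le
      nlinarith [mul_nonneg hε0.le ht0, sq_nonneg t, sq_nonneg ε]
    · nlinarith [mul_nonneg (by nlinarith : (0:ℝ) ≤ a^2 - 1) (by nlinarith : (0:ℝ) ≤ r^2 - 1),
        mul_nonneg hε0.le ht0, sq_nonneg ε]
  have hfin : d ≤ 2*t + 4*ε := by nlinarith
  calc d ≤ 2*t + 4*ε := hfin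
    _ = 2 * t + 4 * s / Real.sqrt n := by rw [hεdef]; ring
end

section
/- Let 0 < s ≤ 1, let M ≥ 8s, and let n be a positive integer. If z ∈ ℂ satisfies |z| ≤ 1 + s/√n, r is a real number with 1/2 ≤ r ≤ 1 + s/√n, and |z − r| ≥ M/√n, then |z − r| ≤ 4·|z·r − 1|. -/
set_option maxHeartbeats 800000


/-- If `|z| ≤ 1 + s/√n`, `1/2 ≤ r ≤ 1 + s/√n`, `0 < s ≤ 1`, `M ≥ 8s` and
`|z − r| ≥ M/√n`, then `|z − r| ≤ 4|zr − 1|`. -/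
theorem dist_le_four_mul_dist_prod_one
    (s M : ℝ) (hs0 : 0 < s) (hs1 : s ≤ 1) (hM : 8 * s ≤ M) (n : ℕ) (hn : 1 ≤ n)
    (z : ℂ) (r : ℝ)
    (hz : ‖z‖ ≤ 1 + s / Real.sqrt n)
    (hr1 : 1 / 2 ≤ r) (hr2 : r ≤ 1 + s / Real.sqrt n)
    (hd : M / Real.sqrt n ≤ ‖z - (r : ℂ)‖) :
    ‖z - (r : ℂ)‖ ≤ 4 * ‖z * (r : ℂ) - 1‖ := by
  have hn1 : (1:ℝ) ≤ Real.sqrt n := by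
    rw [show (1:ℝ) = Real.sqrt 1 by simp]
    exact Real.sqrt_le_sqrt (by exact_mod_cast hn)
  have hsn : (0:ℝ) < Real.sqrt n := lt_of_lt_of_le one_pos hn1
  set δ : ℝ := s / Real.sqrt n with hδdef
  have hδ0 : 0 < δ := div_pos hs0 hsn
  have hδ1 : δ ≤ 1 := by
    rw [hδdef, div_le_one hsn]; exact hs1.trans hn1
  set d : ℝ := ‖z - (r : ℂ)‖ with hdd
  have hd0 : (0:ℝ) ≤ d := norm_nonneg _
  have h8 : 8 * δ ≤ d := by
    have h1 : 8 * s / Real.sqrt n ≤ M / Real.sqrt n :=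
      div_le_div_of_nonneg_right hM hsn.le
    calc 8 * δ = 8 * s / Real.sqrt n := by rw [hδdef]; ring
    _ ≤ M / Real.sqrt n := h1
    _ ≤ d := hd
  set a : ℝ := ‖z‖ with haa
  have ha0 : (0:ℝ) ≤ a := norm_nonneg _
  have hd1 : a - r ≤ d := by
    have h := norm_sub_norm_le z (r : ℂ)
    rw [
      Complex.norm_real, Real.norm_eq_abs, abs_of_nonneg (by linarith : (0:ℝ) ≤ r)] at h
    linarith
  have hd2 : r - a ≤ d := by
    have h := norm_sub_norm_le (r : ℂ) z
    rw [
      Complex.norm_real, Real.norm_eq_abs, abs_of_nonneg (by linarith : (0:ℝ) ≤ r),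
      norm_sub_rev] at h
    linarith
  set X : ℝ := ‖z * (r : ℂ) - 1‖ with hXX
  have hX0 : (0:ℝ) ≤ X := norm_nonneg _
  have key : X ^ 2 = d ^ 2 + (1 - r ^ 2) * (1 - a ^ 2) := by
    rw [hXX, hdd, haa, Complex.sq_norm, Complex.sq_norm, Complex.sq_norm]
    simp only [Complex.normSq_apply, Complex.mul_re, Complex.mul_im, Complex.sub_re,
      Complex.sub_im, Complex.ofReal_re, Complex.ofReal_im, Complex.one_re, Complex.one_im]
    ring
  have hprod : -(6 * δ * d) ≤ (1 - r ^ 2) * (1 - a ^ 2) := by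
    rcases le_total r 1 with hr | hr <;> rcases le_total a 1 with ha | ha
    · nlinarith [mul_nonneg (sub_nonneg.2 hr) (sub_nonneg.2 ha),
        mul_nonneg (mul_nonneg hδ0.le hd0) (by norm_num : (0:ℝ) ≤ 6),
        mul_nonneg hδ0.le hd0]
    · -- r ≤ 1 ≤ a
      have h1 : a ^ 2 - 1 ≤ 3 * δ := by nlinarith
      have h2 : 1 - r ^ 2 ≤ 2 * d := by nlinarith
      nlinarith [mul_nonneg (by linarith : (0:ℝ) ≤ 2 * d - (1 - r ^ 2))
          (by nlinarith : (0:ℝ) ≤ a ^ 2 - 1),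
        mul_le_mul_of_nonneg_left h1 hd0]
    · -- a ≤ 1 ≤ r
      have h1 : r ^ 2 - 1 ≤ 3 * δ := by nlinarith
      have h2 : 1 - a ^ 2 ≤ 2 * d := by nlinarith
      nlinarith [mul_nonneg (by linarith : (0:ℝ) ≤ 2 * d - (1 - a ^ 2))
          (by nlinarith : (0:ℝ) ≤ r ^ 2 - 1),
        mul_le_mul_of_nonneg_left h1 hd0]
    · nlinarith [mul_nonneg (sub_nonneg.2 (by linarith : (1:ℝ) ≤ r))
          (sub_nonneg.2 (by linarith : (1:ℝ) ≤ a)),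
        mul_nonneg hδ0.le hd0]
  have hsq : d ^ 2 ≤ (2 * X) ^ 2 := by
    nlinarith [mul_le_mul_of_nonneg_right h8 hd0]
  have hfin : d ≤ 2 * X := by
    nlinarith [hsq, hd0, hX0]
  linarith
end
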